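/- Let n = 2^{2d}, k = 2^d = √n, and let v = 1_{n/k} ⊗ e₁ be the picket-fence vector with k ones spaced n/k apart. For 1 ≤ i ≤ k let v^{(i)} be the i-th circular shift of v and z^{(i)} = (v^{(i)}, −F v^{(i)}) over the spikes-and-sines dictionary A = [F, I]. Splitting each z^{(i)} into k-sparse halves x₁^{(i)}, x₂^{(i)} with A x₁^{(i)} = A x₂^{(i)}, and setting b = A·(Σ_i x₁^{(i)}), the equation A y = b has at least 2^k solutions y with pairwise distinct supports, each of sparsity between k²/2 and k². -/

import Mathlib

open Matrix Finset

/-- The `n×n` unitary (discrete) Fourier matrix. -/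
noncomputable def fourierMatrix (n : ℕ) : Matrix (Fin n) (Fin n) ℂ :=
  fun j l => Complex.exp (2 * Real.pi * Complex.I * (j : ℕ) * (l : ℕ) / n) / Real.sqrt n

/-- Application of the spikes-and-sines dictionary `A = [F, I]` to a coefficient vector
indexed by `Fin n ⊕ Fin n` (Fourier part on the left, canonical part on the right). -/
noncomputable def dictApply (n : ℕ) (w : Fin n ⊕ Fin n → ℂ) : Fin n → ℂ :=
  (fourierMatrix n).mulVec (fun j => w (Sum.inl j)) + fun j => w (Sum.inr j)

lemma filter_mod_card (n k : ℕ) (hn : n = k * k) (r : ℕ) (hr : r < k) :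
    (Finset.univ.filter fun p : Fin n => (p : ℕ) % k = r).card = k := by
  have hk : 0 < k := lt_of_le_of_lt (Nat.zero_le r) hr
  have : (Finset.univ.filter fun p : Fin n => (p : ℕ) % k = r).card
      = (Finset.univ : Finset (Fin k)).card := by
    refine Finset.card_bij' (fun (p : Fin n) _ => (⟨(p : ℕ) / k, by
        have := p.2; exact Nat.div_lt_of_lt_mul (by omega)⟩ : Fin k))
      (fun (m : Fin k) _ => (⟨r + (m : ℕ) * k, by have := m.2; subst hn; nlinarith⟩ : Fin n))
      ?_ ?_ ?_ ?_
    · intro a ha; exact Finset.mem_univ _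
    · intro m _; simp [Nat.add_mul_mod_self_right, Nat.mod_eq_of_lt hr]
    · intro p hp
      simp only [Finset.mem_filter] at hp
      ext
      simp only []
      conv_rhs => rw [← Nat.div_add_mod (p : ℕ) k]
      rw [hp.2]; ring
    · intro m _
      ext
      simp only []
      rw [Nat.add_mul_div_right _ _ hk, Nat.div_eq_of_lt hr, Nat.zero_add]
  simpa using this

lemma fourier_picket_vanish (n k : ℕ) (hn : n = k * k) (hk : 0 < k) (i : Fin k) (j : Fin n)
    (hj : (j : ℕ) % k ≠ 0) :
    (fourierMatrix n).mulVec (fun l : Fin n => if (l : ℕ) % k = (i : ℕ) then (1:ℂ) else 0) j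
      = 0 := by
  have hkc : (k : ℂ) ≠ 0 := Nat.cast_ne_zero.mpr hk.ne'
  have hnc : (n : ℂ) = (k : ℂ) * (k : ℂ) := by rw [hn]; push_cast; ring
  have hik : (i : ℕ) < n := lt_of_lt_of_le i.2 (by nlinarith [hk])
  set r : ℂ := Complex.exp (2 * Real.pi * Complex.I * (j : ℕ) / k) with hr
  have hr1 : r ≠ 1 := by
    intro h
    rw [hr, Complex.exp_eq_one_iff] at h
    obtain ⟨m, hm⟩ := h
    have h2 : (2 * (Real.pi : ℂ) * Complex.I) ≠ 0 :=
      mul_ne_zero (mul_ne_zero two_ne_zero (Complex.ofReal_ne_zero.mpr Real.pi_ne_zero))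
        Complex.I_ne_zero
    have hj' : ((j : ℕ) : ℂ) = (m : ℂ) * k := by
      field_simp at hm
      have : ((j:ℕ) : ℂ) * (2 * (Real.pi : ℂ) * Complex.I)
          = ((m : ℂ) * k) * (2 * (Real.pi : ℂ) * Complex.I) := by
        linear_combination (2 * (Real.pi : ℂ) * Complex.I) * hm
      exact mul_right_cancel₀ h2 this
    have hj'' : ((j : ℕ) : ℤ) = m * k := by exact_mod_cast hj'
    have : (k : ℤ) ∣ ((j : ℕ) : ℤ) := ⟨m, by linarith⟩
    have hdvd : k ∣ (j : ℕ) := Int.natCast_dvd_natCast.mp (by exact_mod_cast this)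
    obtain ⟨c, hc⟩ := hdvd
    apply hj; rw [hc]; exact Nat.mul_mod_right k c
  have key : ∀ (m : Fin k) (l : Fin n), (l : ℕ) = (i : ℕ) + (m : ℕ) * k →
      fourierMatrix n j l = fourierMatrix n j ⟨(i : ℕ), hik⟩ * r ^ (m : ℕ) := by
    intro m l hl
    simp only [fourierMatrix]
    rw [div_mul_eq_mul_div]
    congr 1
    rw [hr, ← Complex.exp_nat_mul, ← Complex.exp_add]
    congr 1
    have hlc : ((l : ℕ) : ℂ) = ((i : ℕ) : ℂ) + ((m : ℕ) : ℂ) * ((k : ℕ) : ℂ) := by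
      exact_mod_cast congrArg (fun t : ℕ => (t : ℂ)) hl
    rw [hlc, hnc]
    field_simp
  have step1 : (fourierMatrix n).mulVec
        (fun l : Fin n => if (l : ℕ) % k = (i : ℕ) then (1:ℂ) else 0) j
      = ∑ l ∈ Finset.univ.filter (fun l : Fin n => (l : ℕ) % k = (i : ℕ)),
          fourierMatrix n j l := by
    rw [Finset.sum_filter]
    simp [Matrix.mulVec, dotProduct, mul_ite]
  rw [step1]
  have step2 : ∑ l ∈ Finset.univ.filter (fun l : Fin n => (l : ℕ) % k = (i : ℕ)),
        fourierMatrix n j l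
      = ∑ m : Fin k, fourierMatrix n j ⟨(i : ℕ), hik⟩ * r ^ (m : ℕ) := by
    refine Finset.sum_bij' (fun (p : Fin n) _ => (⟨(p : ℕ) / k, by
        have := p.2; exact Nat.div_lt_of_lt_mul (by omega)⟩ : Fin k))
      (fun (m : Fin k) _ => (⟨(i : ℕ) + (m : ℕ) * k, by
        have := m.2; have := i.2; subst hn; nlinarith⟩ : Fin n)) ?_ ?_ ?_ ?_ ?_
    · intro a ha; exact Finset.mem_univ _
    · intro m _
      simp [Nat.add_mul_mod_self_right, Nat.mod_eq_of_lt i.2]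
    · intro p hp
      simp only [Finset.mem_filter] at hp
      ext
      simp only []
      conv_rhs => rw [← Nat.div_add_mod (p : ℕ) k]
      rw [hp.2]; ring
    · intro m _
      ext
      simp only []
      rw [Nat.add_mul_div_right _ _ hk, Nat.div_eq_of_lt i.2, Nat.zero_add]
    · intro p hp
      simp only [Finset.mem_filter] at hp
      refine key ⟨(p : ℕ) / k, by have := p.2; exact Nat.div_lt_of_lt_mul (by omega)⟩ p ?_
      simp only []
      conv_lhs => rw [← Nat.div_add_mod (p : ℕ) k]
      rw [hp.2]; ring
  rw [step2, ← Finset.mul_sum, Fin.sum_univ_eq_sum_range (fun m => r ^ m) k]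
  rw [geom_sum_eq hr1]
  have hrk : r ^ k = 1 := by
    rw [hr, ← Complex.exp_nat_mul]
    have : (k : ℂ) * (2 * Real.pi * Complex.I * (j : ℕ) / k)
        = ((j : ℕ) : ℂ) * (2 * Real.pi * Complex.I) := by field_simp
    rw [this, Complex.exp_nat_mul_two_pi_mul_I]
  rw [hrk]
  simp

lemma dictApply_apply (n : ℕ) (w : Fin n ⊕ Fin n → ℂ) (j : Fin n) :
    dictApply n w j = (∑ l, fourierMatrix n j l * w (Sum.inl l)) + w (Sum.inr j) := rfl

lemma dictApply_sub (n : ℕ) (w w' : Fin n ⊕ Fin n → ℂ) :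
    dictApply n (w - w') = dictApply n w - dictApply n w' := by
  funext j
  simp only [dictApply_apply, Pi.sub_apply, mul_sub, Finset.sum_sub_distrib]
  ring

lemma dictApply_smul (n : ℕ) (ca : ℂ) (w : Fin n ⊕ Fin n → ℂ) :
    dictApply n (ca • w) = ca • dictApply n w := by
  funext j
  simp only [dictApply_apply, Pi.smul_apply, smul_eq_mul, Finset.mul_sum, mul_add]
  ring_nf
  congr 1
  apply Finset.sum_congr rfl; intro l _; ring

lemma dictApply_sum (n : ℕ) {ι : Type*} (s : Finset ι) (f : ι → (Fin n ⊕ Fin n → ℂ)) :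
    dictApply n (∑ i ∈ s, f i) = ∑ i ∈ s, dictApply n (f i) := by
  funext j
  simp only [dictApply_apply, Finset.sum_apply, Finset.mul_sum]
  rw [Finset.sum_comm, ← Finset.sum_add_distrib]

open Classical in
lemma supp_card_split {n : ℕ} (w : Fin n ⊕ Fin n → ℂ) :
    (Function.support w).ncard
      = (Finset.univ.filter fun q : Fin n => w (Sum.inl q) ≠ 0).card
        + (Finset.univ.filter fun q : Fin n => w (Sum.inr q) ≠ 0).card := by
  have h : Function.support w
      = ↑(((Finset.univ.filter fun q : Fin n => w (Sum.inl q) ≠ 0).image Sum.inl)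
          ∪ ((Finset.univ.filter fun q : Fin n => w (Sum.inr q) ≠ 0).image Sum.inr)) := by
    ext s
    cases s <;> simp [Function.mem_support]
  rw [h, Set.ncard_coe_finset, Finset.card_union_of_disjoint,
    Finset.card_image_of_injective _ Sum.inl_injective,
    Finset.card_image_of_injective _ Sum.inr_injective]
  simp [Finset.disjoint_left]

/-- Spikes and sines: with `n = 2^{2d}`, `k = 2^d = √n`, picket-fence vectors
`v⁽ⁱ⁾` (the `i`-th circular shifts of `1_{n/k} ⊗ e₁`, with pairwise disjoint supports),
kernel vectors `z⁽ⁱ⁾ = (v⁽ⁱ⁾, -F v⁽ⁱ⁾)` split into `k`-sparse halves `x₁⁽ⁱ⁾, x₂⁽ⁱ⁾`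
(each `x₁⁽ⁱ⁾` having exactly `k/2` of its support in the spike part), and
`b = A(∑ᵢ x₁⁽ⁱ⁾)`, the equation `A y = b` has at least `2^k` solutions with pairwise
distinct supports, each of sparsity between `k²/2` and `k²`. -/
theorem spikes_and_sines_exponential_list (d : ℕ) (hd : 1 ≤ d)
    (n k : ℕ) (hn : n = 2 ^ (2 * d)) (hk : k = 2 ^ d)
    (v : Fin k → Fin n → ℂ)
    (hv : ∀ (i : Fin k) (j : Fin n), v i j = if (j : ℕ) % k = (i : ℕ) then 1 else 0)
    (x₁ x₂ : Fin k → (Fin n ⊕ Fin n → ℂ))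
    (hsplit : ∀ i, x₁ i - x₂ i =
      Sum.elim (v i) (-((fourierMatrix n).mulVec (v i))))
    (hsupp : ∀ i, Function.support (x₁ i) ⊆
      Function.support (Sum.elim (v i) (-((fourierMatrix n).mulVec (v i)))))
    (hcard : ∀ i, (Function.support (x₁ i)).ncard = k)
    (hleft : ∀ i, (Function.support (x₁ i) ∩ Set.range Sum.inl).ncard = k / 2)
    (b : Fin n → ℂ) (hb : b = dictApply n (∑ i, x₁ i)) :
    ∃ y : (Fin k → Bool) → (Fin n ⊕ Fin n → ℂ),
      (∀ c, dictApply n (y c) = b) ∧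
      (∀ c c', c ≠ c' →
        Function.support (y c) ≠ Function.support (y c')) ∧
      (∀ c, k ^ 2 / 2 ≤ (Function.support (y c)).ncard ∧
        (Function.support (y c)).ncard ≤ k ^ 2) := by
  classical
  have hk0 : 0 < k := by rw [hk]; positivity
  have hk2 : 2 ≤ k := by
    rw [hk]
    calc 2 = 2 ^ 1 := (pow_one 2).symm
    _ ≤ 2 ^ d := Nat.pow_le_pow_right (by norm_num) hd
  have hkeven : k = 2 * 2 ^ (d - 1) := by
    rw [hk, ← pow_succ']
    congr 1
    omega
  have hnkk : n = k * k := by rw [hn, hk, ← pow_add, two_mul]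
  -- vanishing of the Fourier transform of picket-fence vectors off multiples of k
  have Fv_zero : ∀ (i : Fin k) (q : Fin n), (q : ℕ) % k ≠ 0 →
      (fourierMatrix n).mulVec (v i) q = 0 := by
    intro i q h
    have hvfun : v i = fun l : Fin n => if (l : ℕ) % k = (i : ℕ) then (1:ℂ) else 0 :=
      funext (hv i)
    rw [hvfun]
    exact fourier_picket_vanish n k hnkk hk0 i q h
  -- support location facts
  have hx1l : ∀ (i : Fin k) (q : Fin n), x₁ i (Sum.inl q) ≠ 0 → (q : ℕ) % k = (i : ℕ) := by
    intro i q h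
    have h2 := hsupp i (Function.mem_support.mpr h)
    rw [Function.mem_support, Sum.elim_inl, hv] at h2
    by_contra hne
    simp [hne] at h2
  have hx1r : ∀ (i : Fin k) (q : Fin n), x₁ i (Sum.inr q) ≠ 0 → (q : ℕ) % k = 0 := by
    intro i q h
    have h2 := hsupp i (Function.mem_support.mpr h)
    rw [Function.mem_support, Sum.elim_inr] at h2
    by_contra hne
    rw [Pi.neg_apply, Fv_zero i q hne] at h2
    simp at h2
  -- pick a point in the spike part of the support of each x₁ i
  have hpex : ∀ i : Fin k, ∃ q : Fin n, x₁ i (Sum.inl q) ≠ 0 := by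
    intro i
    have hne : (Function.support (x₁ i) ∩ Set.range Sum.inl).Nonempty := by
      apply Set.nonempty_of_ncard_ne_zero
      rw [hleft i]
      omega
    obtain ⟨s, hs1, q, hq⟩ := hne
    exact ⟨q, by rw [hq]; exact hs1⟩
  choose p hp using hpex
  set a : Fin k → ℂ := fun i => x₁ i (Sum.inl (p i)) with ha_def
  have ha : ∀ i, a i ≠ 0 := hp
  have hpB : ∀ i, ((p i : ℕ)) % k = (i : ℕ) := fun i => hx1l i (p i) (hp i)
  set zfun : Fin k → (Fin n ⊕ Fin n → ℂ) :=
    fun i => Sum.elim (v i) (-((fourierMatrix n).mulVec (v i))) with hzfun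
  set y : (Fin k → Bool) → (Fin n ⊕ Fin n → ℂ) :=
    fun c => (∑ i, x₁ i) - ∑ i ∈ Finset.univ.filter (fun i => c i = true), a i • zfun i
    with hy
  -- pointwise description of y on the spike (inl) part
  have yl : ∀ (c : Fin k → Bool) (i : Fin k) (q : Fin n), (q : ℕ) % k = (i : ℕ) →
      y c (Sum.inl q) = x₁ i (Sum.inl q) - (if c i = true then a i else 0) := by
    intro c i q hq
    simp only [hy, Pi.sub_apply, Finset.sum_apply, Pi.smul_apply, smul_eq_mul]
    congr 1
    · apply Finset.sum_eq_single i
      · intro i' _ hne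
        by_contra h
        exact hne (Fin.ext (by rw [← hx1l i' q h, hq]))
      · intro h; exact absurd (Finset.mem_univ i) h
    · have hz : ∀ i' : Fin k, zfun i' (Sum.inl q) = if i' = i then 1 else 0 := by
        intro i'
        simp only [hzfun, Sum.elim_inl, hv, hq]
        by_cases h : i' = i
        · simp [h]
        · rw [if_neg (fun hh => h (Fin.ext hh.symm)), if_neg h]
      simp only [hz, mul_ite, mul_one, mul_zero]
      rw [Finset.sum_ite_eq']
      simp
  -- pointwise vanishing of y on the inr part off multiples of k
  have yr : ∀ (c : Fin k → Bool) (q : Fin n), (q : ℕ) % k ≠ 0 → y c (Sum.inr q) = 0 := by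
    intro c q hq
    simp only [hy, Pi.sub_apply, Finset.sum_apply, Pi.smul_apply, smul_eq_mul]
    have h1 : ∀ i : Fin k, x₁ i (Sum.inr q) = 0 := by
      intro i; by_contra h; exact hq (hx1r i q h)
    have h2 : ∀ i : Fin k, zfun i (Sum.inr q) = 0 := by
      intro i
      simp only [hzfun, Sum.elim_inr, Pi.neg_apply, Fv_zero i q hq, neg_zero]
    simp [h1, h2]
  -- the Finsets B i and T i
  set B : Fin k → Finset (Fin n) :=
    fun i => Finset.univ.filter (fun q : Fin n => (q : ℕ) % k = (i : ℕ)) with hB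
  set T : Fin k → Finset (Fin n) :=
    fun i => Finset.univ.filter (fun q : Fin n => x₁ i (Sum.inl q) ≠ 0) with hT
  have hBcard : ∀ i, (B i).card = k := fun i => filter_mod_card n k hnkk (i : ℕ) i.2
  have hTB : ∀ i, T i ⊆ B i := by
    intro i q hq
    simp only [hT, Finset.mem_filter, Finset.mem_univ, true_and] at hq
    simp only [hB, Finset.mem_filter, Finset.mem_univ, true_and]
    exact hx1l i q hq
  have hTcard : ∀ i, (T i).card = k / 2 := by
    intro i
    have himg : Function.support (x₁ i) ∩ Set.range Sum.inl
        = Sum.inl '' (↑(T i) : Set (Fin n)) := by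
      ext s
      constructor
      · rintro ⟨hs1, q, rfl⟩
        exact ⟨q, by simp only [hT, Finset.coe_filter, Finset.mem_univ, true_and,
          Set.mem_setOf_eq]; exact hs1, rfl⟩
      · rintro ⟨q, hq, rfl⟩
        simp only [hT, Finset.coe_filter, Finset.mem_univ, true_and, Set.mem_setOf_eq] at hq
        exact ⟨hq, ⟨q, rfl⟩⟩
    have hl := hleft i
    rw [himg, Set.ncard_image_of_injective _ Sum.inl_injective, Set.ncard_coe_finset] at hl
    exact hl
  have hpT : ∀ i, p i ∈ T i := by
    intro i
    simp only [hT, Finset.mem_filter, Finset.mem_univ, true_and]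
    exact hp i
  -- fibers of the left support
  have fiber_false : ∀ (c : Fin k → Bool) (i : Fin k), c i = false →
      Finset.univ.filter (fun q : Fin n => y c (Sum.inl q) ≠ 0 ∧ (q : ℕ) % k = (i : ℕ))
        = T i := by
    intro c i hci
    ext q
    simp only [Finset.mem_filter, Finset.mem_univ, true_and, hT]
    constructor
    · rintro ⟨hy0, hq⟩
      rw [yl c i q hq, hci] at hy0
      simpa using hy0
    · intro hne
      have hq := hx1l i q hne
      refine ⟨?_, hq⟩
      rw [yl c i q hq, hci]
      simpa using hne
  have fiber_true_le : ∀ (c : Fin k → Bool) (i : Fin k), c i = true →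
      (Finset.univ.filter
        (fun q : Fin n => y c (Sum.inl q) ≠ 0 ∧ (q : ℕ) % k = (i : ℕ))).card ≤ k - 1 := by
    intro c i hci
    have hsub : Finset.univ.filter
        (fun q : Fin n => y c (Sum.inl q) ≠ 0 ∧ (q : ℕ) % k = (i : ℕ)) ⊆ B i := by
      intro q hq
      simp only [Finset.mem_filter, Finset.mem_univ, true_and] at hq
      simp only [hB, Finset.mem_filter, Finset.mem_univ, true_and]
      exact hq.2
    have hpmem : p i ∈ B i := by
      simp only [hB, Finset.mem_filter, Finset.mem_univ, true_and]; exact hpB i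
    have hpnot : p i ∉ Finset.univ.filter
        (fun q : Fin n => y c (Sum.inl q) ≠ 0 ∧ (q : ℕ) % k = (i : ℕ)) := by
      simp only [Finset.mem_filter, Finset.mem_univ, true_and, not_and]
      intro hy0
      exact absurd (by rw [yl c i (p i) (hpB i), hci, if_pos rfl, ha_def]; ring) hy0
    have hlt : (Finset.univ.filter
        (fun q : Fin n => y c (Sum.inl q) ≠ 0 ∧ (q : ℕ) % k = (i : ℕ))).card < (B i).card :=
      Finset.card_lt_card ((Finset.ssubset_iff_of_subset hsub).mpr ⟨p i, hpmem, hpnot⟩)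
    rw [hBcard i] at hlt
    omega
  have fiber_true_ge : ∀ (c : Fin k → Bool) (i : Fin k), c i = true →
      k / 2 ≤ (Finset.univ.filter
        (fun q : Fin n => y c (Sum.inl q) ≠ 0 ∧ (q : ℕ) % k = (i : ℕ))).card := by
    intro c i hci
    have hsub : B i \ T i ⊆ Finset.univ.filter
        (fun q : Fin n => y c (Sum.inl q) ≠ 0 ∧ (q : ℕ) % k = (i : ℕ)) := by
      intro q hq
      simp only [Finset.mem_sdiff, hB, hT, Finset.mem_filter, Finset.mem_univ, true_and] at hq
      obtain ⟨hq1, hq2⟩ := hq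
      have hx0 : x₁ i (Sum.inl q) = 0 := not_not.mp hq2
      simp only [Finset.mem_filter, Finset.mem_univ, true_and]
      refine ⟨?_, hq1⟩
      rw [yl c i q hq1, hci, if_pos rfl, hx0, zero_sub]
      exact neg_ne_zero.mpr (ha i)
    have := Finset.card_le_card hsub
    rw [Finset.card_sdiff_of_subset (hTB i), hBcard i, hTcard i] at this
    omega
  -- decomposition of the left support count
  have left_count : ∀ c : Fin k → Bool,
      (Finset.univ.filter fun q : Fin n => y c (Sum.inl q) ≠ 0).card
        = ∑ i : Fin k, (Finset.univ.filter
            (fun q : Fin n => y c (Sum.inl q) ≠ 0 ∧ (q : ℕ) % k = (i : ℕ))).card := by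
    intro c
    rw [Finset.card_eq_sum_card_fiberwise
      (f := fun q : Fin n => (⟨(q : ℕ) % k, Nat.mod_lt _ hk0⟩ : Fin k)) (t := Finset.univ)
      (fun q _ => Finset.mem_univ _)]
    apply Finset.sum_congr rfl
    intro i _
    congr 1
    rw [Finset.filter_filter]
    apply Finset.filter_congr
    intro q _
    constructor
    · rintro ⟨h1, h2⟩; exact ⟨h1, by rw [← h2]⟩
    · rintro ⟨h1, h2⟩; exact ⟨h1, Fin.ext h2⟩
  -- bounds for the fibers, uniform in c
  have fiber_ge : ∀ (c : Fin k → Bool) (i : Fin k), k / 2 ≤ (Finset.univ.filter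
      (fun q : Fin n => y c (Sum.inl q) ≠ 0 ∧ (q : ℕ) % k = (i : ℕ))).card := by
    intro c i
    cases hci : c i
    · rw [fiber_false c i hci, hTcard i]
    · exact fiber_true_ge c i hci
  have fiber_le : ∀ (c : Fin k → Bool) (i : Fin k), (Finset.univ.filter
      (fun q : Fin n => y c (Sum.inl q) ≠ 0 ∧ (q : ℕ) % k = (i : ℕ))).card ≤ k - 1 := by
    intro c i
    cases hci : c i
    · rw [fiber_false c i hci, hTcard i]; omega
    · exact fiber_true_le c i hci
  -- right support count bound
  have right_le : ∀ c : Fin k → Bool,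
      (Finset.univ.filter fun q : Fin n => y c (Sum.inr q) ≠ 0).card ≤ k := by
    intro c
    have hsub : (Finset.univ.filter fun q : Fin n => y c (Sum.inr q) ≠ 0)
        ⊆ Finset.univ.filter fun q : Fin n => (q : ℕ) % k = 0 := by
      intro q hq
      simp only [Finset.mem_filter, Finset.mem_univ, true_and] at hq ⊢
      by_contra h
      exact hq (yr c q h)
    have := Finset.card_le_card hsub
    rwa [filter_mod_card n k hnkk 0 hk0] at this
  refine ⟨y, ?_, ?_, ?_⟩
  · -- solutions
    intro c
    rw [hy]
    simp only []
    have hzero : ∀ i ∈ Finset.univ.filter (fun i => c i = true),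
        dictApply n (a i • zfun i) = 0 := by
      intro i _
      rw [dictApply_smul]
      have hker : dictApply n (zfun i) = 0 := by
        funext j
        simp only [hzfun, dictApply_apply, Sum.elim_inr, Pi.neg_apply]
        have : (∑ l, fourierMatrix n j l * Sum.elim (v i)
            (-((fourierMatrix n).mulVec (v i))) (Sum.inl l))
            = (fourierMatrix n).mulVec (v i) j := by
          simp only [Sum.elim_inl]
          rfl
        rw [this]
        simp
      rw [hker, smul_zero]
    rw [dictApply_sub,
      dictApply_sum n (Finset.univ.filter fun i => c i = true) (fun i => a i • zfun i),
      Finset.sum_eq_zero hzero, sub_zero, hb]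
  · -- distinct supports
    intro c c' hne hsupp_eq
    obtain ⟨i, hi⟩ := Function.ne_iff.mp hne
    have hBTne : ∃ q : Fin n, (q : ℕ) % k = (i : ℕ) ∧ x₁ i (Sum.inl q) = 0 := by
      have hc : (B i \ T i).card = k - k / 2 := by
        rw [Finset.card_sdiff_of_subset (hTB i), hBcard i, hTcard i]
      have hpos : 0 < (B i \ T i).card := by omega
      obtain ⟨q, hq⟩ := Finset.card_pos.mp hpos
      simp only [Finset.mem_sdiff, hB, hT, Finset.mem_filter, Finset.mem_univ, true_and] at hq
      exact ⟨q, hq.1, not_not.mp hq.2⟩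
    obtain ⟨q, hq1, hq2⟩ := hBTne
    have hmem := Set.ext_iff.mp hsupp_eq (Sum.inl q)
    rw [Function.mem_support, Function.mem_support, yl c i q hq1, yl c' i q hq1, hq2] at hmem
    cases hci : c i <;> cases hci' : c' i
    · exact hi (by rw [hci, hci'])
    · rw [hci, hci'] at hmem
      simp [ha i] at hmem
    · rw [hci, hci'] at hmem
      simp [ha i] at hmem
    · exact hi (by rw [hci, hci'])
  · -- sparsity bounds
    intro c
    rw [supp_card_split (y c), left_count c]
    constructor
    · -- lower bound
      have hsum : k * (k / 2) ≤ ∑ i : Fin k, (Finset.univ.filter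
          (fun q : Fin n => y c (Sum.inl q) ≠ 0 ∧ (q : ℕ) % k = (i : ℕ))).card := by
        calc k * (k / 2) = ∑ _i : Fin k, k / 2 := by
              rw [Finset.sum_const, Finset.card_univ, Fintype.card_fin, smul_eq_mul]
        _ ≤ _ := Finset.sum_le_sum (fun i _ => fiber_ge c i)
      have harith : k ^ 2 / 2 = k * (k / 2) := by
        rw [hkeven]
        have h1 : (2 * 2 ^ (d - 1)) ^ 2 = 2 * (2 * 2 ^ (d - 1) * 2 ^ (d - 1)) := by ring
        have h2 : (2 * 2 ^ (d - 1)) / 2 = 2 ^ (d - 1) := by omega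
        rw [h1, h2, Nat.mul_div_cancel_left _ (by norm_num : 0 < 2)]
      omega
    · -- upper bound
      have hsum : ∑ i : Fin k, (Finset.univ.filter
          (fun q : Fin n => y c (Sum.inl q) ≠ 0 ∧ (q : ℕ) % k = (i : ℕ))).card
            ≤ k * (k - 1) := by
        calc _ ≤ ∑ _i : Fin k, (k - 1) := Finset.sum_le_sum (fun i _ => fiber_le c i)
        _ = k * (k - 1) := by
              rw [Finset.sum_const, Finset.card_univ, Fintype.card_fin, smul_eq_mul]
      have harith : k * (k - 1) + k = k ^ 2 := by
        obtain ⟨k', rfl⟩ : ∃ k', k = k' + 1 := ⟨k - 1, by omega⟩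
        simp only [Nat.add_sub_cancel]
        ring
      have := right_le c
      omega
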